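/- For all X, Y ∈ G₂ and z ∈ G₁: ṽ(XY, z) = β_X( ṽ(Y,z) ) * ṽ(X,z). -/

import Mathlib

/-- **setting of Theorem 8.1.**  With `(β, v, φ, ṽ)` as in Theorem 8.1, for
all `X, Y ∈ G₂` and `z ∈ G₁`: `ṽ(XY, z) = β_X(ṽ(Y,z)) * ṽ(X,z)`. -/
theorem vt_multiplicative_in_first_argument
    {A : Type*} [NormedRing A] [StarRing A] [CStarRing A] [NormedAlgebra ℂ A]
    [CompleteSpace A] [StarModule ℂ A]
    {G₁ G₂ : Type*} [CommGroup G₁] [CommGroup G₂]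
    (β : G₁ × G₂ → (A ≃⋆ₐ[ℂ] A)) (v : G₁ × G₂ → G₁ × G₂ → unitary A)
    (htw : ∀ ξ η (a : A), β ξ (β η a) = (v ξ η : A) * β (ξ * η) a * star ((v ξ η : A)))
    (φ : G₁ × G₂ → G₁ × G₂ → G₁ × G₂ → ℂ)
    (hφabs : ∀ ξ η ζ, ‖φ ξ η ζ‖ = 1)
    (hmul₁ : ∀ ξ ξ' η ζ, φ (ξ * ξ') η ζ = φ ξ η ζ * φ ξ' η ζ)
    (hmul₂ : ∀ ξ η η' ζ, φ ξ (η * η') ζ = φ ξ η ζ * φ ξ η' ζ)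
    (hmul₃ : ∀ ξ η ζ ζ', φ ξ η (ζ * ζ') = φ ξ η ζ * φ ξ η ζ')
    (hswap₁₂ : ∀ ξ η ζ, φ η ξ ζ = (φ ξ η ζ)⁻¹)
    (hswap₂₃ : ∀ ξ η ζ, φ ξ ζ η = (φ ξ η ζ)⁻¹)
    (hcoc : ∀ ξ η ζ, (v ξ η : A) * (v (ξ * η) ζ : A)
      = φ ξ η ζ • (β ξ ((v η ζ : A)) * (v ξ (η * ζ) : A)))
    (hv₁ : ∀ x y : G₁, v (x, 1) (y, 1) = 1)
    (hv₂ : ∀ X Y : G₂, v ((1 : G₁), X) (1, Y) = 1)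
    (hφG₁ : ∀ x y z : G₁, φ (x, 1) (y, 1) (z, 1) = 1)
    (hφG₂ : ∀ (ξ : G₁ × G₂) (X Y : G₂),
      φ ξ ((1 : G₁), X) (1, Y) = 1 ∧ φ ((1 : G₁), X) ξ (1, Y) = 1 ∧
        φ ((1 : G₁), X) ((1 : G₁), Y) ξ = 1)
    (vt : G₁ × G₂ → G₁ × G₂ → A)
    (hvt : ∀ ξ η, vt ξ η = (v ξ η : A) * star ((v η ξ : A))) :
    ∀ (X Y : G₂) (z : G₁),
      vt ((1 : G₁), X * Y) (z, 1)
        = β ((1 : G₁), X) (vt ((1 : G₁), Y) (z, 1)) * vt ((1 : G₁), X) (z, 1) := by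

  intro X Y z
  have pe1 : ((1:G₁), X) * ((1:G₁), Y) = ((1:G₁), X*Y) := by simp [Prod.ext_iff]
  have pe2 : ((1:G₁), Y) * (z, (1:G₂)) = (z, Y) := by simp [Prod.ext_iff]
  have pe3 : ((1:G₁), X) * (z, (1:G₂)) = (z, X) := by simp [Prod.ext_iff]
  have pe4 : (z, (1:G₂)) * ((1:G₁), X) = (z, X) := by simp [Prod.ext_iff]
  have pe5 : (z, (1:G₂)) * ((1:G₁), Y) = (z, Y) := by simp [Prod.ext_iff]
  have h1 := hcoc ((1:G₁),X) ((1:G₁),Y) (z,1)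
  rw [pe1, pe2, hv₂, (hφG₂ (z,1) X Y).2.2, one_smul, OneMemClass.coe_one, one_mul] at h1
  have h3 := hcoc (z,1) ((1:G₁),X) ((1:G₁),Y)
  rw [pe4, pe1, hv₂, (hφG₂ (z,1) X Y).1, one_smul, OneMemClass.coe_one, map_one,
    one_mul] at h3
  have h2 := hcoc ((1:G₁),X) (z,1) ((1:G₁),Y)
  have hφ2 : φ ((1:G₁),X) (z,1) ((1:G₁),Y) = 1 := by
    rw [hswap₂₃, (hφG₂ (z,1) X Y).2.2, inv_one]
  rw [pe3, pe5, hφ2, one_smul] at h2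
  have hm : (v (z,X) ((1:G₁),Y) : A)
      = star (v ((1:G₁),X) (z,1) : A)
        * (β ((1:G₁),X) (v (z,1) ((1:G₁),Y) : A) * (v ((1:G₁),X) (z,Y) : A)) := by
    rw [← h2, ← mul_assoc, Unitary.coe_star_mul_self, one_mul]
  rw [hvt, hvt, hvt, h1, ← h3, hm, map_mul, map_star, star_mul, star_mul, star_mul,
    star_star]
  calc β ((1:G₁),X) (v ((1:G₁),Y) (z,1) : A) * (v ((1:G₁),X) (z,Y) : A)
        * ((star (v ((1:G₁),X) (z,Y) : A)
            * star (β ((1:G₁),X) (v (z,1) ((1:G₁),Y) : A))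
            * (v ((1:G₁),X) (z,1) : A)) * star (v (z,1) ((1:G₁),X) : A))
      = β ((1:G₁),X) (v ((1:G₁),Y) (z,1) : A)
        * ((v ((1:G₁),X) (z,Y) : A) * star (v ((1:G₁),X) (z,Y) : A))
        * star (β ((1:G₁),X) (v (z,1) ((1:G₁),Y) : A))
        * ((v ((1:G₁),X) (z,1) : A) * star (v (z,1) ((1:G₁),X) : A)) := by
        noncomm_ring
    _ = β ((1:G₁),X) (v ((1:G₁),Y) (z,1) : A)
        * star (β ((1:G₁),X) (v (z,1) ((1:G₁),Y) : A))
        * ((v ((1:G₁),X) (z,1) : A) * star (v (z,1) ((1:G₁),X) : A)) := by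
        rw [Unitary.mul_star_self_of_mem (v ((1:G₁),X) (z,Y)).2, mul_one]
    _ = _ := by rw [← map_star, ← map_mul]
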